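/- arXiv:2408.02801 — 2 statements merged into one kernel-verified Lean document; each statement's English description precedes it below -/
import Mathlib

section
/- Let L : ℝ^t → ℝ be differentiable and suppose Θ* = (w*, b*) is a local minimizer of Θ ↦ L(Θ) + λ*‖w‖₁ with λ* > 0. Define a_i = |(∂L/∂w_i)(Θ*)| for i = 1,…,d_W, sorted nondecreasingly as a_{i_1} ≤ … ≤ a_{i_{d_W}}. If there exists l ∈ {0,1,…,d_W} such that a_{i_j} < λ* for all j ≤ d_W − l and a_{i_j} = λ* for all j > d_W − l, then the number of nonzero components of w* is at most l. -/
open Finset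

theorem stmt5 {dW db : ℕ}
    (L : (Fin dW → ℝ) × (Fin db → ℝ) → ℝ) (hL : Differentiable ℝ L)
    (lam : ℝ) (hlam : 0 < lam)
    (Θs : (Fin dW → ℝ) × (Fin db → ℝ))
    (hmin : IsLocalMin (fun Θ : (Fin dW → ℝ) × (Fin db → ℝ) =>
      L Θ + lam * ∑ i, |Θ.1 i|) Θs)
    (a : Fin dW → ℝ)
    (ha : ∀ i, a i = |fderiv ℝ L Θs (Pi.single i 1, 0)|)
    (σ : Equiv.Perm (Fin dW)) (hσ : Monotone fun j => a (σ j))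
    (l : ℕ) (hl : l ≤ dW)
    (hbelow : ∀ j : Fin dW, (j : ℕ) < dW - l → a (σ j) < lam)
    (heq : ∀ j : Fin dW, dW - l ≤ (j : ℕ) → a (σ j) = lam) :
    (Finset.univ.filter fun i => Θs.1 i ≠ 0).card ≤ l := by
  -- Key claim: if Θs.1 i ≠ 0 then a i = lam
  have key : ∀ i : Fin dW, Θs.1 i ≠ 0 → a i = lam := by
    intro i hi
    set v : (Fin dW → ℝ) × (Fin db → ℝ) := (Pi.single i 1, 0) with hv
    set c : ℝ := Θs.1 i with hc
    set ψ : ℝ → (Fin dW → ℝ) × (Fin db → ℝ) := fun s => Θs + (s - c) • v with hψ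
    have hψc : ψ c = Θs := by simp [hψ]
    have hψd : HasDerivAt ψ v c := by
      have h1 : HasDerivAt (fun s : ℝ => (s - c) • v) ((1:ℝ) • v) c :=
        ((hasDerivAt_id c).sub_const c).smul_const v
      simpa [hψ] using h1.const_add Θs
    have hLd : HasDerivAt (fun s => L (ψ s)) (fderiv ℝ L Θs v) c := by
      have := ((hL (ψ c)).hasFDerivAt).comp_hasDerivAt c hψd
      rwa [hψc] at this
    -- penalty part
    have hsum : ∀ s : ℝ, (∑ j, |(ψ s).1 j|) = |s| + ∑ j ∈ univ.erase i, |Θs.1 j| := by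
      intro s
      have h1 : ∀ j : Fin dW, (ψ s).1 j = Θs.1 j + (s - c) * (Pi.single i 1 : Fin dW → ℝ) j := by
        intro j; simp [hψ, hv]
      rw [← Finset.add_sum_erase _ _ (Finset.mem_univ i)]
      congr 1
      · rw [h1 i]; simp [hc]
      · apply Finset.sum_congr rfl
        intro j hj
        rw [h1 j, Pi.single_apply]; rw [if_neg (Finset.ne_of_mem_erase hj)]
        ring_nf
    have habs : HasDerivAt (fun s : ℝ => |s|) ((SignType.sign c : ℝ)) c :=
      hasDerivAt_abs hi
    have hpen : HasDerivAt (fun s => lam * ∑ j, |(ψ s).1 j|)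
        (lam * (SignType.sign c : ℝ)) c := by
      have h2 : HasDerivAt (fun s : ℝ => |s| + ∑ j ∈ univ.erase i, |Θs.1 j|)
          ((SignType.sign c : ℝ)) c := habs.add_const _
      have h3 := h2.const_mul lam
      refine h3.congr_of_eventuallyEq ?_
      filter_upwards with s
      rw [hsum s]
    have htot : HasDerivAt (fun s => L (ψ s) + lam * ∑ j, |(ψ s).1 j|)
        (fderiv ℝ L Θs v + lam * (SignType.sign c : ℝ)) c := hLd.add hpen
    have hminc : IsLocalMin (fun s => L (ψ s) + lam * ∑ j, |(ψ s).1 j|) c := by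
      have hcont : ContinuousAt ψ c := hψd.continuousAt
      have := hmin
      rw [← hψc] at this
      exact IsMinFilter.comp_tendsto this (hcont.tendsto.mono_left le_rfl |>.mono_right (by rw [hψc]))
    have hzero : fderiv ℝ L Θs v + lam * (SignType.sign c : ℝ) = 0 :=
      hminc.hasDerivAt_eq_zero htot
    have hD : fderiv ℝ L Θs v = -(lam * (SignType.sign c : ℝ)) := by linarith
    rw [ha i, ← hv, hD, abs_neg, abs_mul, abs_of_pos hlam]
    rcases lt_or_gt_of_ne hi with h | h
    · simp [hc] at h ⊢; rw [sign_neg h]; norm_num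
    · simp [hc] at h ⊢; rw [sign_pos h]; norm_num
  -- Counting
  set S := Finset.univ.filter fun i => Θs.1 i ≠ 0 with hS
  have hTsub : S.image σ.symm ⊆ Finset.univ.filter fun j : Fin dW => dW - l ≤ (j : ℕ) := by
    intro j hj
    simp only [Finset.mem_image, hS, Finset.mem_filter, Finset.mem_univ, true_and] at hj ⊢
    obtain ⟨i, hi, rfl⟩ := hj
    by_contra hcon
    push_neg at hcon
    have := hbelow _ hcon
    rw [Equiv.apply_symm_apply] at this
    rw [key i hi] at this
    exact lt_irrefl _ this
  have hcardS : S.card = (S.image σ.symm).card :=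
    (Finset.card_image_of_injective S σ.symm.injective).symm
  have hclt : (Finset.univ.map (Fin.castLEEmb (Nat.sub_le dW l))) ⊆
      Finset.univ.filter fun j : Fin dW => (j : ℕ) < dW - l := by
    intro j hj
    simp only [Finset.mem_map, Finset.mem_univ, true_and] at hj
    obtain ⟨k, rfl⟩ := hj
    simp [Fin.castLEEmb]
  have hcardlt : dW - l ≤ (Finset.univ.filter fun j : Fin dW => (j : ℕ) < dW - l).card := by
    calc dW - l = (Finset.univ.map (Fin.castLEEmb (Nat.sub_le dW l))).card := by simp
    _ ≤ _ := Finset.card_le_card hclt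
  have hsplit : (Finset.univ.filter fun j : Fin dW => dW - l ≤ (j : ℕ)).card +
      (Finset.univ.filter fun j : Fin dW => (j : ℕ) < dW - l).card = dW := by
    have := Finset.card_filter_add_card_filter_not
      (s := (Finset.univ : Finset (Fin dW))) (p := fun j : Fin dW => dW - l ≤ (j : ℕ))
    simp only [not_le] at this
    simpa using this
  have hge : (Finset.univ.filter fun j : Fin dW => dW - l ≤ (j : ℕ)).card ≤ l := by omega
  calc S.card = (S.image σ.symm).card := hcardS
    _ ≤ (Finset.univ.filter fun j : Fin dW => dW - l ≤ (j : ℕ)).card := Finset.card_le_card hTsub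
    _ ≤ l := hge
end

section
/- Let L : ℝ^t → ℝ be differentiable and suppose Θ* = (w*, b*) is a local minimizer of Θ ↦ L(Θ) + λ*‖w‖₁ with λ* > 0, where w* has exactly l* nonzero components. Then there exists l ∈ {l*, l*+1, …, d_W} such that, with a_i = |(∂L/∂w_i)(Θ*)| sorted nondecreasingly as a_{i_1} ≤ … ≤ a_{i_{d_W}}, one has a_{i_j} < λ* for all j ≤ d_W − l and a_{i_j} = λ* for all j > d_W − l. -/
open Filter

open Finset

lemma key_grad {dW db : ℕ}
    (L : (Fin dW → ℝ) × (Fin db → ℝ) → ℝ) (hL : Differentiable ℝ L)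
    (lam : ℝ) (hlam : 0 < lam)
    (Θs : (Fin dW → ℝ) × (Fin db → ℝ))
    (hmin : IsLocalMin (fun Θ : (Fin dW → ℝ) × (Fin db → ℝ) =>
      L Θ + lam * ∑ i, |Θ.1 i|) Θs) (i : Fin dW) :
    |fderiv ℝ L Θs (Pi.single i 1, 0)| ≤ lam ∧
      (Θs.1 i ≠ 0 → |fderiv ℝ L Θs (Pi.single i 1, 0)| = lam) := by
  set v : (Fin dW → ℝ) × (Fin db → ℝ) := (Pi.single i 1, 0) with hv
  set D : ℝ := fderiv ℝ L Θs v with hD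
  set g : ℝ → (Fin dW → ℝ) × (Fin db → ℝ) := fun t => Θs + t • v with hgdef
  have hg0 : g 0 = Θs := by simp [hgdef]
  have hg : HasDerivAt g v 0 := by
    have h1 : HasDerivAt (fun t : ℝ => t • v) ((1:ℝ) • v) 0 :=
      (hasDerivAt_id 0).smul_const v
    simpa [hgdef] using h1.const_add Θs
  have hh : HasDerivAt (fun t => L (g t)) D 0 := by
    have h2 : HasFDerivAt L (fderiv ℝ L Θs) (g 0) := hg0 ▸ (hL Θs).hasFDerivAt
    exact h2.comp_hasDerivAt 0 hg
  -- local min along the line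
  have hloc : IsLocalMin (fun t => L (g t) + lam * ∑ j, |(g t).1 j|) 0 := by
    have hcont : Continuous g := by
      apply Continuous.add continuous_const
      exact (continuous_id.smul continuous_const)
    have htd : Tendsto g (nhds 0) (nhds Θs) := by
      simpa [hg0] using hcont.tendsto 0
    have := IsMinFilter.comp_tendsto (by rwa [hg0]) htd
    exact this
  set C : ℝ := ∑ j ∈ univ.erase i, |Θs.1 j| with hC
  have hsum : ∀ t : ℝ, ∑ j, |(g t).1 j| = |Θs.1 i + t| + C := by
    intro t
    rw [← Finset.add_sum_erase _ _ (mem_univ i)]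
    congr 1
    · simp [hgdef, hv]
    · refine Finset.sum_congr rfl fun j hj => ?_
      have : j ≠ i := (Finset.mem_erase.mp hj).1
      simp [hgdef, hv, Pi.single_apply, this]
  have hphi : IsLocalMin (fun t => L (g t) + lam * |Θs.1 i + t|) 0 := by
    have h0 := hloc
    unfold IsLocalMin IsMinFilter at h0 ⊢
    filter_upwards [h0] with t ht
    simp only [hsum, mul_add] at ht ⊢
    linarith
  have heq : Θs.1 i ≠ 0 → |D| = lam := by
    intro hc
    rcases hc.lt_or_gt with hneg | hpos
    · have hev : ∀ᶠ t in nhds (0:ℝ), Θs.1 i + t < 0 := by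
        have h4 : Tendsto (fun t : ℝ => Θs.1 i + t) (nhds 0) (nhds (Θs.1 i + 0)) :=
          (continuous_const.add continuous_id).tendsto 0
        simp only [add_zero] at h4
        exact h4.eventually_lt_const hneg
      have hder : HasDerivAt (fun t => L (g t) + lam * |Θs.1 i + t|) (D + lam * (-1)) 0 := by
        have inner : HasDerivAt (fun t : ℝ => Θs.1 i + t) 1 0 := (hasDerivAt_id 0).const_add _
        have h2 : HasDerivAt (fun t : ℝ => lam * (-(Θs.1 i + t))) (lam * (-1)) 0 :=
          inner.neg.const_mul lam
        refine (hh.add h2).congr_of_eventuallyEq ?_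
        filter_upwards [hev] with t ht
        rw [abs_of_neg ht]; rfl
      have hz := hphi.hasDerivAt_eq_zero hder
      have hDl : D = lam := by linarith
      rw [hDl, abs_of_pos hlam]
    · have hev : ∀ᶠ t in nhds (0:ℝ), 0 < Θs.1 i + t := by
        have h4 : Tendsto (fun t : ℝ => Θs.1 i + t) (nhds 0) (nhds (Θs.1 i + 0)) :=
          (continuous_const.add continuous_id).tendsto 0
        simp only [add_zero] at h4
        exact h4.eventually_const_lt hpos
      have hder : HasDerivAt (fun t => L (g t) + lam * |Θs.1 i + t|) (D + lam * 1) 0 := by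
        have inner : HasDerivAt (fun t : ℝ => Θs.1 i + t) 1 0 := (hasDerivAt_id 0).const_add _
        have h2 : HasDerivAt (fun t : ℝ => lam * (Θs.1 i + t)) (lam * 1) 0 :=
          inner.const_mul lam
        refine (hh.add h2).congr_of_eventuallyEq ?_
        filter_upwards [hev] with t ht
        rw [abs_of_pos ht]; rfl
      have hz := hphi.hasDerivAt_eq_zero hder
      have hDl : D = -lam := by linarith
      rw [hDl, abs_neg, abs_of_pos hlam]
  have hle : |D| ≤ lam := by
    by_cases hc : Θs.1 i = 0
    · have hphi0 : IsLocalMin (fun t => L (g t) + lam * |t|) 0 := by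
        simpa [hc] using hphi
      have hev : ∀ᶠ t in nhds (0:ℝ), L (g 0) ≤ L (g t) + lam * |t| := by
        have := hphi0
        unfold IsLocalMin IsMinFilter at this
        filter_upwards [this] with t ht
        simpa using ht
      have hslope := hasDerivAt_iff_tendsto_slope.mp hh
      have hub : D ≤ lam := by
        have h1 : Tendsto (slope (fun t => L (g t)) 0) (nhdsWithin 0 (Set.Iio 0)) (nhds D) :=
          hslope.mono_left (nhdsWithin_mono 0 (fun t ht => ne_of_lt ht))
        refine le_of_tendsto h1 ?_
        filter_upwards [hev.filter_mono nhdsWithin_le_nhds, self_mem_nhdsWithin] with t ht ht0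
        have ht0' : (t:ℝ) < 0 := ht0
        rw [slope_def_field, div_le_iff_of_neg (by linarith : t - 0 < 0)]
        rw [abs_of_neg ht0'] at ht
        nlinarith
      have hlb : -lam ≤ D := by
        have h1 : Tendsto (slope (fun t => L (g t)) 0) (nhdsWithin 0 (Set.Ioi 0)) (nhds D) :=
          hslope.mono_left (nhdsWithin_mono 0 (fun t ht => ne_of_gt ht))
        refine ge_of_tendsto h1 ?_
        filter_upwards [hev.filter_mono nhdsWithin_le_nhds, self_mem_nhdsWithin] with t ht ht0
        have ht0' : (0:ℝ) < t := ht0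
        rw [slope_def_field, le_div_iff₀ (by linarith : (0:ℝ) < t - 0)]
        rw [abs_of_pos ht0'] at ht
        nlinarith
      exact abs_le.mpr ⟨hlb, hub⟩
    · exact le_of_eq (heq hc)
  exact ⟨hle, heq⟩

theorem stmt6 {dW db : ℕ}
    (L : (Fin dW → ℝ) × (Fin db → ℝ) → ℝ) (hL : Differentiable ℝ L)
    (lam : ℝ) (hlam : 0 < lam)
    (Θs : (Fin dW → ℝ) × (Fin db → ℝ))
    (hmin : IsLocalMin (fun Θ : (Fin dW → ℝ) × (Fin db → ℝ) =>
      L Θ + lam * ∑ i, |Θ.1 i|) Θs)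
    (ls : ℕ) (hls : (Finset.univ.filter fun i => Θs.1 i ≠ 0).card = ls)
    (a : Fin dW → ℝ)
    (ha : ∀ i, a i = |fderiv ℝ L Θs (Pi.single i 1, 0)|)
    (σ : Equiv.Perm (Fin dW)) (hσ : Monotone fun j => a (σ j)) :
    ∃ l : ℕ, ls ≤ l ∧ l ≤ dW ∧
      (∀ j : Fin dW, (j : ℕ) < dW - l → a (σ j) < lam) ∧
      (∀ j : Fin dW, dW - l ≤ (j : ℕ) → a (σ j) = lam) := by
  have key := fun i => key_grad L hL lam hlam Θs hmin i
  have hle : ∀ i, a i ≤ lam := fun i => (ha i) ▸ (key i).1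
  have heq : ∀ i, Θs.1 i ≠ 0 → a i = lam := fun i hi => (ha i) ▸ (key i).2 hi
  set S := univ.filter (fun j : Fin dW => a (σ j) = lam) with hS
  refine ⟨S.card, ?_, ?_, ?_, ?_⟩
  · rw [← hls]
    apply Finset.card_le_card_of_injOn (fun i => σ⁻¹ i)
    · intro i hi
      simp only [Finset.mem_coe, Finset.mem_filter, Finset.mem_univ, true_and, hS] at hi ⊢
      rw [Equiv.Perm.coe_inv, Equiv.apply_symm_apply]
      exact heq i hi
    · exact (σ⁻¹.injective).injOn
  · simpa using Finset.card_filter_le univ (fun j : Fin dW => a (σ j) = lam)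
  · intro j hj
    by_contra hlt
    have hja : a (σ j) = lam := le_antisymm (hle _) (not_lt.mp hlt)
    have hsub : Finset.Ici j ⊆ S := by
      intro k hk
      simp only [hS, Finset.mem_filter, Finset.mem_univ, true_and]
      have h1 : a (σ j) ≤ a (σ k) := hσ (Finset.mem_Ici.mp hk)
      rw [hja] at h1
      exact le_antisymm (hle _) h1
    have hcard := Finset.card_le_card hsub
    rw [Fin.card_Ici] at hcard
    have := j.isLt
    omega
  · intro j hj
    by_contra hne
    have hsub : S ⊆ Finset.Ioi j := by
      intro k hk
      simp only [hS, Finset.mem_filter, Finset.mem_univ, true_and] at hk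
      rw [Finset.mem_Ioi]
      by_contra hkj
      have h1 : a (σ k) ≤ a (σ j) := hσ (not_lt.mp hkj)
      rw [hk] at h1
      exact hne (le_antisymm (hle _) h1)
    have hcard := Finset.card_le_card hsub
    rw [Fin.card_Ioi] at hcard
    have := j.isLt
    omega
end
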